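/- Let Δ ∈ MvPolynomial (Fin 4) ℂ be the discriminant Δ = 3(3p₀p₃ − p₁p₂)² + 4(p₀p₂³ + p₁³p₃) − 4p₁²p₂² in the variables p₀, p₁, p₂, p₃. For (p₀,p₁,p₂,p₃) ∈ ℂ⁴, all four partial derivatives ∂Δ/∂p₀, ∂Δ/∂p₁, ∂Δ/∂p₂, ∂Δ/∂p₃ vanish at (p₀,p₁,p₂,p₃) if and only if there exist a, b ∈ ℂ with (p₀,p₁,p₂,p₃) = (a³, 3a²b, 3ab², b³), i.e. if and only if the binary cubic form p₀x³ + p₁x²y + p₂xy² + p₃y³ is the cube (ax + by)³ of a linear form. In other words, the singular locus of the discriminant hypersurface {Δ = 0} ⊂ ℙ³ is exactly the twisted cubic v₃(ℙ¹) of perfect cubes, and the first derivatives of the quartic invariant cut out the closed orbit v₃(ℙ¹) = σ₊(v₃(ℙ¹)) set-theoretically. -/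

import Mathlib

open MvPolynomial

/-- The discriminant `Δ = 3(3p₀p₃ − p₁p₂)² + 4(p₀p₂³ + p₁³p₃) − 4p₁²p₂²` as a polynomial
in the four coefficients `p₀, p₁, p₂, p₃`. -/
noncomputable def Disc : MvPolynomial (Fin 4) ℂ :=
  3 * (3 * X 0 * X 3 - X 1 * X 2) ^ 2 + 4 * (X 0 * X 2 ^ 3 + X 1 ^ 3 * X 3)
    - 4 * X 1 ^ 2 * X 2 ^ 2

lemma pd3 (i : Fin 4) : pderiv i (3 : MvPolynomial (Fin 4) ℂ) = 0 := by
  rw [show (3 : MvPolynomial (Fin 4) ℂ) = C 3 by simp [map_ofNat], pderiv_C]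

lemma pd4 (i : Fin 4) : pderiv i (4 : MvPolynomial (Fin 4) ℂ) = 0 := by
  rw [show (4 : MvPolynomial (Fin 4) ℂ) = C 4 by simp [map_ofNat], pderiv_C]

lemma eval_pd0 (p : Fin 4 → ℂ) : eval p (pderiv 0 Disc) =
    18 * p 3 * (3 * p 0 * p 3 - p 1 * p 2) + 4 * p 2 ^ 3 := by
  simp [Disc, pderiv_mul, pderiv_pow, pderiv_X, pd3, pd4, Pi.single_apply]
  ring

lemma eval_pd1 (p : Fin 4 → ℂ) : eval p (pderiv 1 Disc) =
    -6 * p 2 * (3 * p 0 * p 3 - p 1 * p 2) + 12 * p 1 ^ 2 * p 3 - 8 * p 1 * p 2 ^ 2 := by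
  simp [Disc, pderiv_mul, pderiv_pow, pderiv_X, pd3, pd4, Pi.single_apply]
  ring

lemma eval_pd2 (p : Fin 4 → ℂ) : eval p (pderiv 2 Disc) =
    -6 * p 1 * (3 * p 0 * p 3 - p 1 * p 2) + 12 * p 0 * p 2 ^ 2 - 8 * p 1 ^ 2 * p 2 := by
  simp [Disc, pderiv_mul, pderiv_pow, pderiv_X, pd3, pd4, Pi.single_apply]
  ring

lemma eval_pd3 (p : Fin 4 → ℂ) : eval p (pderiv 3 Disc) =
    18 * p 0 * (3 * p 0 * p 3 - p 1 * p 2) + 4 * p 1 ^ 3 := by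
  simp [Disc, pderiv_mul, pderiv_pow, pderiv_X, pd3, pd4, Pi.single_apply]
  ring

/-- All four partial derivatives of the discriminant `Δ` vanish at `(p₀,p₁,p₂,p₃)` if and
only if the binary cubic `p₀x³ + p₁x²y + p₂xy² + p₃y³` is the cube of a linear form: the
singular locus of `{Δ = 0}` is the twisted cubic. -/
theorem stmt6 (p : Fin 4 → ℂ) :
    (∀ i : Fin 4, MvPolynomial.eval p (MvPolynomial.pderiv i Disc) = 0) ↔
    ∃ a b : ℂ, p 0 = a ^ 3 ∧ p 1 = 3 * a ^ 2 * b ∧ p 2 = 3 * a * b ^ 2 ∧ p 3 = b ^ 3 := by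
  constructor
  · intro h
    have h0 := h 0; have h1 := h 1; have h2 := h 2; have h3 := h 3
    rw [eval_pd0] at h0; rw [eval_pd1] at h1; rw [eval_pd2] at h2; rw [eval_pd3] at h3
    by_cases hp0 : p 0 = 0
    · -- then p1 = 0, p2 = 0, and p = (0,0,0,p3)
      have hp1 : p 1 = 0 := by
        have : p 1 ^ 3 = 0 := by
          have := h3; rw [hp0] at this; linear_combination (1/4 : ℂ) * this
        exact pow_eq_zero_iff (n := 3) (by norm_num) |>.mp this
      have hp2 : p 2 = 0 := by
        have : p 2 ^ 3 = 0 := by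
          rw [hp0, hp1] at h0; linear_combination (1/4 : ℂ) * h0
        exact pow_eq_zero_iff (n := 3) (by norm_num) |>.mp this
      obtain ⟨b, hb⟩ := IsAlgClosed.exists_pow_nat_eq (p 3) (n := 3) (by norm_num)
      exact ⟨0, b, by simp [hp0], by simp [hp1], by simp [hp2], hb.symm⟩
    · -- main case: derive twisted cubic equations
      have key1 : p 1 ^ 2 = 3 * p 0 * p 2 := by
        have sq : (p 1 ^ 2 - 3 * p 0 * p 2) ^ 2 = 0 := by
          have comb : 4 * (p 1 ^ 2 - 3 * p 0 * p 2) ^ 2 = 0 := by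
            linear_combination (3 * p 0) * h2 + p 1 * h3
          linear_combination (1/4 : ℂ) * comb
        have h' := pow_eq_zero_iff (n := 2) (by norm_num) |>.mp sq
        linear_combination h'
      have key2 : 9 * p 0 * p 3 = p 1 * p 2 := by
        -- from h3: 18 p0 (3p0p3 - p1p2) = -4 p1³ = -4 p1 (3 p0 p2)
        have h3' : 18 * p 0 * (3 * p 0 * p 3 - p 1 * p 2) + 12 * p 0 * p 1 * p 2 = 0 := by
          linear_combination h3 - 4 * p 1 * key1
        have : p 0 * (9 * p 0 * p 3 - p 1 * p 2) = 0 := by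
          linear_combination (1/6 : ℂ) * h3'
        have h' := (mul_eq_zero.mp this).resolve_left hp0
        linear_combination h'
      obtain ⟨a, ha⟩ := IsAlgClosed.exists_pow_nat_eq (p 0) (n := 3) (by norm_num)
      have ha0 : a ≠ 0 := by
        intro h'; apply hp0; rw [← ha, h']; ring
      refine ⟨a, p 1 / (3 * a ^ 2), ?_, ?_, ?_, ?_⟩
      · exact ha.symm
      · field_simp
      · -- p 2 = 3 a (p1/(3a²))² = p1²/(3 a³) = p1²/(3 p0)
        field_simp
        rw [← ha] at key1
        linear_combination -key1
      · -- p 3 = p1³/(27 a⁶)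
        have e3 : p 1 ^ 3 = 27 * p 0 ^ 2 * p 3 := by
          linear_combination p 1 * key1 - 3 * p 0 * key2
        field_simp
        rw [← ha] at e3
        linear_combination -e3
  · rintro ⟨a, b, h0, h1, h2, h3⟩ i
    fin_cases i
    · show eval p (pderiv 0 Disc) = 0
      rw [eval_pd0, h0, h1, h2, h3]; ring
    · show eval p (pderiv 1 Disc) = 0
      rw [eval_pd1, h0, h1, h2, h3]; ring
    · show eval p (pderiv 2 Disc) = 0
      rw [eval_pd2, h0, h1, h2, h3]; ring
    · show eval p (pderiv 3 Disc) = 0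
      rw [eval_pd3, h0, h1, h2, h3]; ring
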